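/- The family (g, γ) ↦ X_g ∘ Z_γ, indexed by pairs consisting of an element g ∈ G and an additive character γ of G, is linearly independent over ℂ and spans the space of all ℂ-linear endomorphisms of ℂ^G; that is, it forms a ℂ-basis of End_ℂ(ℂ^G). -/

import Mathlib

/-- Translation operator `X_g` on `ℂ^G`: `(X_g f)(x) = f (x - g)`. -/
noncomputable def Xop {G : Type*} [AddCommGroup G] (g : G) :
    EuclideanSpace ℂ G →ₗ[ℂ] EuclideanSpace ℂ G where
  toFun f := WithLp.toLp 2 (fun x => f (x - g))
  map_add' := by intros; rfl
  map_smul' := by intros; rfl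

/-- Multiplication operator `Z_γ` on `ℂ^G`: `(Z_γ f)(x) = γ x * f x`. -/
noncomputable def Zop {G : Type*} [AddCommGroup G] (γ : AddChar G ℂ) :
    EuclideanSpace ℂ G →ₗ[ℂ] EuclideanSpace ℂ G where
  toFun f := WithLp.toLp 2 (fun x => γ x * f x)
  map_add' := by
    intro f₁ f₂
    ext x
    show γ x * (f₁ x + f₂ x) = γ x * f₁ x + γ x * f₂ x
    ring
  map_smul' := by
    intro c f
    ext x
    show γ x * (c * f x) = c * (γ x * f x)
    ring

lemma euclid_sum_apply {G ι : Type*} [AddCommGroup G] (s : Finset ι)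
    (v : ι → EuclideanSpace ℂ G) (x : G) : (∑ i ∈ s, v i) x = ∑ i ∈ s, v i x := by
  classical
  induction s using Finset.induction with
  | empty => rfl
  | insert _ _ h ih =>
    rw [Finset.sum_insert h, Finset.sum_insert h, ← ih]
    rfl

theorem Xop_Zop_linearIndependent {G : Type*} [AddCommGroup G] [Fintype G] :
    LinearIndependent ℂ (fun p : G × AddChar G ℂ => Xop p.1 ∘ₗ Zop p.2) := by
  classical
  rw [Fintype.linearIndependent_iff]
  intro c hc
  rintro ⟨g, γ⟩
  have key : ∀ g : G, ∑ γ : AddChar G ℂ, c (g, γ) • (γ : G → ℂ) = 0 := by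
    intro g
    funext y
    have h := LinearMap.congr_fun hc (WithLp.toLp 2 (fun x => if x = y then (1 : ℂ) else 0))
    rw [LinearMap.sum_apply, LinearMap.zero_apply] at h
    have h2 := congrArg (fun f : EuclideanSpace ℂ G => f (y + g)) h
    simp only [euclid_sum_apply] at h2
    have h3 : ∑ p : G × AddChar G ℂ,
        c p * (p.2 (y + g - p.1) * (if y + g - p.1 = y then (1 : ℂ) else 0)) = 0 := by
      refine Eq.trans (Finset.sum_congr rfl fun p _ => ?_) h2
      rfl
    rw [Fintype.sum_prod_type] at h3
    have h4 : ∀ a : G, a ≠ g → ∑ χ : AddChar G ℂ,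
        c (a, χ) * (χ (y + g - a) * (if y + g - a = y then (1 : ℂ) else 0)) = 0 := by
      intro a ha
      have : y + g - a ≠ y := by
        intro hh
        apply ha
        have h5 : y + g = y + a := sub_eq_iff_eq_add.mp hh
        exact (add_left_cancel h5).symm
      simp [this]
    rw [Finset.sum_eq_single g (fun a _ ha => h4 a ha)
      (fun h => absurd (Finset.mem_univ g) h)] at h3
    have hy : y + g - g = y := by abel
    rw [hy] at h3
    simp only [Finset.sum_apply, Pi.smul_apply, Pi.zero_apply, smul_eq_mul]
    simpa using h3
  have := Fintype.linearIndependent_iff.mp (AddChar.linearIndependent G ℂ)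
    (fun χ => c (g, χ)) (key g)
  exact this γ

theorem Xop_Zop_basis {G : Type*} [AddCommGroup G] [Fintype G] :
    LinearIndependent ℂ (fun p : G × AddChar G ℂ => Xop p.1 ∘ₗ Zop p.2) ∧
    Submodule.span ℂ (Set.range (fun p : G × AddChar G ℂ => Xop p.1 ∘ₗ Zop p.2)) = ⊤ := by
  refine ⟨Xop_Zop_linearIndependent, ?_⟩
  have : Nonempty (G × AddChar G ℂ) := ⟨(0, 1)⟩
  refine Xop_Zop_linearIndependent.span_eq_top_of_card_eq_finrank ?_
  rw [Fintype.card_prod, AddChar.card_eq, Module.finrank_linearMap, finrank_euclideanSpace]
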